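/- Let D=(V,A) be a digraph with nonnegative integer arc weights w. Define g: Z^V → Z ∪ {+∞} by g(η) = min{ w(B) : B a branching in D with R(B) = supp⁺(η) } for η ∈ Z₊^V admitting such a branching, and g(η) = +∞ otherwise. Then g is an M♮-convex function: for all η, ζ ∈ dom g and u with η(u) > ζ(u), either g(η−χᵤ)+g(ζ+χᵤ) ≤ g(η)+g(ζ), or there exists v with η(v) < ζ(v) such that g(η−χᵤ+χᵥ)+g(ζ+χᵤ−χᵥ) ≤ g(η)+g(ζ). -/

import Mathlib

open scoped Classical
open Finset

variable {V : Type*} [Fintype V] [DecidableEq V]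

/-- A closed directed walk (cycle) using arcs of `B`. -/
def HasCycle (B : Finset (V × V)) : Prop :=
  ∃ (n : ℕ) (f : Fin (n + 1) → V), ∀ i : Fin (n + 1), (f i, f (i + 1)) ∈ B

/-- `B` is a branching in the digraph with arc set `A`. -/
def IsBranching (A B : Finset (V × V)) : Prop :=
  B ⊆ A ∧ (∀ v : V, (B.filter (fun a => a.2 = v)).card ≤ 1) ∧ ¬ HasCycle B

/-- `R(B)`: the set of vertices with no arc of `B` entering them. -/
def rootSet (B : Finset (V × V)) : Finset V :=
  Finset.univ.filter (fun v => ∀ a ∈ B, a.2 ≠ v)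

/-- Reachability via directed paths using arcs of `A`. -/
def Reaches (A : Finset (V × V)) (u v : V) : Prop :=
  Relation.ReflTransGen (fun x y => (x, y) ∈ A) u v

/-- A source component: a strongly connected component with no entering arc. -/
def IsSourceComponent (A : Finset (V × V)) (K : Set V) : Prop :=
  (∃ v : V, K = {u : V | Reaches A u v ∧ Reaches A v u}) ∧
    ∀ a ∈ A, a.2 ∈ K → a.1 ∈ K

/-- Characteristic vector of a single vertex. -/
def chi (u : V) : V → ℤ := fun v => if v = u then 1 else 0

/-- `gFun A w η`: the minimum weight of a branching `B` in `(V, A)` with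
`R(B) = supp⁺(η)`, for `η ∈ ℤ₊^V`; `+∞` (i.e. `⊤`) otherwise. -/
noncomputable def gFun (A : Finset (V × V)) (w : V × V → ℤ) (η : V → ℤ) : WithTop ℤ :=
  if ∀ v : V, 0 ≤ η v then
    (A.powerset.filter (fun B => IsBranching A B ∧
        rootSet B = Finset.univ.filter (fun v => 0 < η v))).inf
      (fun B => ((∑ a ∈ B, w a : ℤ) : WithTop ℤ))
  else ⊤

lemma mem_rootSet {B : Finset (V × V)} {v : V} :
    v ∈ rootSet B ↔ ∀ a ∈ B, a.2 ≠ v := by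
  simp [rootSet]

lemma rootSet_empty : rootSet (∅ : Finset (V × V)) = univ := by
  ext v; simp [mem_rootSet]

lemma hasCycle_mono {B C : Finset (V × V)} (h : B ⊆ C) : HasCycle B → HasCycle C := by
  rintro ⟨n, f, hf⟩; exact ⟨n, f, fun i => h (hf i)⟩

lemma isBranching_subset {A B C : Finset (V × V)} (hB : IsBranching A B) (h : C ⊆ B) :
    IsBranching A C := by
  refine ⟨h.trans hB.1, fun v => le_trans (card_le_card ?_) (hB.2.1 v), fun hc => hB.2.2 (hasCycle_mono h hc)⟩
  exact filter_subset_filter _ h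

lemma rootSet_insert (a : V × V) (B : Finset (V × V)) :
    rootSet (insert a B) = (rootSet B).erase a.2 := by
  ext v
  simp only [mem_rootSet, mem_erase, mem_insert]
  constructor
  · intro h
    refine ⟨fun hv => (h a (Or.inl rfl)) hv.symm, fun b hb => h b (Or.inr hb)⟩
  · rintro ⟨h1, h2⟩ b hb
    rcases hb with rfl | hb
    · exact fun hc => h1 hc.symm
    · exact h2 b hb

lemma rootSet_erase {B : Finset (V × V)} {a : V × V}
    (hd : ∀ v : V, (B.filter (fun b => b.2 = v)).card ≤ 1) (ha : a ∈ B) :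
    rootSet (B.erase a) = insert a.2 (rootSet B) := by
  ext v
  simp only [mem_rootSet, mem_insert, mem_erase]
  constructor
  · intro h
    by_cases hv : v = a.2
    · exact Or.inl hv
    · exact Or.inr (fun b hb => if hba : b = a then by
        subst hba; exact fun hc => hv hc.symm
      else h b ⟨hba, hb⟩)
  · rintro (rfl | h) b ⟨hba, hb⟩
    · intro hc
      have h1 : b ∈ B.filter (fun x => x.2 = a.2) := mem_filter.2 ⟨hb, hc⟩
      have h2 : a ∈ B.filter (fun x => x.2 = a.2) := mem_filter.2 ⟨ha, rfl⟩
      have := hd a.2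
      have : b = a := by
        by_contra hne
        have : 2 ≤ (B.filter (fun x => x.2 = a.2)).card := by
          have : ({b, a} : Finset (V × V)) ⊆ B.filter (fun x => x.2 = a.2) := by
            intro x hx; rcases mem_insert.1 hx with rfl | hx
            · exact h1
            · exact (mem_singleton.1 hx) ▸ h2
          calc 2 = ({b, a} : Finset (V × V)).card := (card_pair hne).symm
          _ ≤ _ := card_le_card this
        omega
      exact hba this
    · exact h b hb

lemma no_cycle_insert {B : Finset (V × V)} {a : V × V} (hB : ¬ HasCycle B)
    (h1 : a.1 ∈ rootSet B) (hne : a.1 ≠ a.2) : ¬ HasCycle (insert a B) := by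
  rintro ⟨n, f, hf⟩
  by_cases hu : ∃ i : Fin (n + 1), f i = a.1 ∧ f (i + 1) = a.2
  · obtain ⟨i, hi1, hi2⟩ := hu
    have harc : (f (i - 1), f (i - 1 + 1)) ∈ insert a B := hf (i - 1)
    rw [sub_add_cancel, hi1] at harc
    rcases mem_insert.1 harc with heq | hmem
    · exact hne (congrArg Prod.snd heq)
    · exact (mem_rootSet.1 h1) _ hmem rfl
  · push_neg at hu
    refine hB ⟨n, f, fun i => ?_⟩
    rcases mem_insert.1 (hf i) with heq | hmem
    · exact absurd (congrArg Prod.snd heq) (hu i (congrArg Prod.fst heq))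
    · exact hmem

lemma exists_root_of_closed {B : Finset (V × V)} (hB : ¬ HasCycle B) {X : Finset V}
    (hne : X.Nonempty) (hcl : ∀ a ∈ B, a.2 ∈ X → a.1 ∈ X) :
    ∃ r ∈ X, r ∈ rootSet B := by
  by_contra hcon
  push_neg at hcon
  have hpar : ∀ v ∈ X, ∃ p : V, (p, v) ∈ B ∧ p ∈ X := by
    intro v hv
    have h' := hcon v hv
    rw [mem_rootSet] at h'
    push_neg at h'
    obtain ⟨a, ha, ha2⟩ := h'
    obtain ⟨p, q⟩ := a
    cases ha2
    exact ⟨p, ha, hcl _ ha hv⟩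
  classical
  let par : V → V := fun v => if h : ∃ p : V, (p, v) ∈ B ∧ p ∈ X then h.choose else v
  have hpar' : ∀ v ∈ X, (par v, v) ∈ B ∧ par v ∈ X := by
    intro v hv
    have hex : ∃ p : V, (p, v) ∈ B ∧ p ∈ X := hpar v hv
    simpa only [par, dif_pos hex] using hex.choose_spec
  obtain ⟨v0, hv0⟩ := hne
  let seq : ℕ → V := fun n => par^[n] v0
  have hseqX : ∀ n, seq n ∈ X := by
    intro n
    induction n with
    | zero => exact hv0
    | succ k ih =>
      have h : seq (k + 1) = par (seq k) := Function.iterate_succ_apply' par k v0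
      rw [h]; exact (hpar' _ ih).2
  have hseqB : ∀ n, (seq (n + 1), seq n) ∈ B := by
    intro n
    have h : seq (n + 1) = par (seq n) := Function.iterate_succ_apply' par n v0
    rw [h]; exact (hpar' _ (hseqX n)).1
  have hninj : ¬ Function.Injective seq := fun hinj =>
    (Finite.of_injective seq hinj).false
  obtain ⟨i, j, hij, hlt⟩ : ∃ i j : ℕ, seq i = seq j ∧ i < j := by
    rw [Function.not_injective_iff] at hninj
    obtain ⟨i, j, h1, h2⟩ := hninj
    rcases lt_or_gt_of_ne h2 with h | h
    · exact ⟨i, j, h1, h⟩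
    · exact ⟨j, i, h1.symm, h⟩
  set m := j - i with hm
  have hji : j = i + m := by omega
  refine hB ⟨m - 1, fun k => seq (i + (m - 1 - (k : ℕ))), fun k => ?_⟩
  simp only []
  rw [Fin.val_add_one]
  by_cases hk : k = Fin.last (m - 1)
  · rw [if_pos hk, hk]
    simp only [Fin.val_last]
    have e1 : i + (m - 1 - (m - 1)) = i := by omega
    have e2 : i + (m - 1 - 0) = i + (m - 1) := by omega
    rw [e1, e2, hij, show j = (i + (m - 1)) + 1 from by omega]
    exact hseqB _
  · rw [if_neg hk]
    have hklt : (k : ℕ) < m - 1 := by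
      have h2 := Fin.is_le k
      rcases lt_or_eq_of_le h2 with h | h
      · exact h
      · exact absurd (Fin.ext h) hk
    rw [show i + (m - 1 - (k : ℕ)) = (i + (m - 1 - ((k : ℕ) + 1))) + 1 from by omega]
    exact hseqB _

lemma raise_roots {A B : Finset (V × V)} (hB : IsBranching A B) {R' : Finset V}
    (h : rootSet B ⊆ R') :
    ∃ C, C ⊆ B ∧ IsBranching A C ∧ rootSet C = R' := by
  refine ⟨B.filter (fun a => a.2 ∉ R'), filter_subset _ _,
    isBranching_subset hB (filter_subset _ _), ?_⟩
  ext v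
  simp only [mem_rootSet, mem_filter]
  constructor
  · intro hv
    by_contra hvR
    have hvroot : v ∉ rootSet B := fun hr => hvR (h hr)
    rw [mem_rootSet] at hvroot
    push_neg at hvroot
    obtain ⟨a, ha, ha2⟩ := hvroot
    exact hv a ⟨ha, ha2 ▸ hvR⟩ ha2
  · rintro hvR a ⟨_, ha2⟩ rfl
    exact ha2 hvR
-- TAGGED SECTION (to be appended after aux1 content)
def dIn (E : Finset ((V × V) × Bool)) (X : Finset V) : ℕ :=
  (E.filter (fun e => e.1.2 ∈ X ∧ e.1.1 ∉ X)).card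

def need (R1 R2 X : Finset V) : ℕ :=
  (if X ∩ R1 = ∅ then 1 else 0) + (if X ∩ R2 = ∅ then 1 else 0)

def Cond (E : Finset ((V × V) × Bool)) (R1 R2 : Finset V) : Prop :=
  ∀ X : Finset V, X.Nonempty → need R1 R2 X ≤ dIn E X

lemma cond_symm {E : Finset ((V × V) × Bool)} {R1 R2 : Finset V} :
    Cond E R1 R2 ↔ Cond E R2 R1 := by
  unfold Cond need
  constructor <;> (intro h X hX; have := h X hX; omega)

lemma one_le_dIn {E : Finset ((V × V) × Bool)} {X : Finset V} {e : (V × V) × Bool}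
    (he : e ∈ E) (h2 : e.1.2 ∈ X) (h1 : e.1.1 ∉ X) : 1 ≤ dIn E X :=
  card_pos.2 ⟨e, mem_filter.2 ⟨he, h2, h1⟩⟩

lemma two_le_dIn {E : Finset ((V × V) × Bool)} {X : Finset V} {e f : (V × V) × Bool}
    (he : e ∈ E) (he2 : e.1.2 ∈ X) (he1 : e.1.1 ∉ X)
    (hf : f ∈ E) (hf2 : f.1.2 ∈ X) (hf1 : f.1.1 ∉ X) (hef : e ≠ f) : 2 ≤ dIn E X := by
  have hsub : ({e, f} : Finset ((V × V) × Bool)) ⊆ E.filter (fun e => e.1.2 ∈ X ∧ e.1.1 ∉ X) := by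
    intro x hx
    rcases mem_insert.1 hx with rfl | hx
    · exact mem_filter.2 ⟨he, he2, he1⟩
    · exact (mem_singleton.1 hx) ▸ mem_filter.2 ⟨hf, hf2, hf1⟩
  calc 2 = ({e, f} : Finset ((V × V) × Bool)).card := (card_pair hef).symm
  _ ≤ _ := card_le_card hsub

lemma dIn_zero_iff {E : Finset ((V × V) × Bool)} {X : Finset V} :
    dIn E X = 0 ↔ ∀ e ∈ E, e.1.2 ∈ X → e.1.1 ∈ X := by
  unfold dIn
  rw [card_eq_zero, filter_eq_empty_iff]
  constructor
  · intro h e he h2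
    by_contra h1
    exact h he ⟨h2, h1⟩
  · intro h e he
    rw [not_and, not_not]
    exact h e he

lemma dIn_submod (E : Finset ((V × V) × Bool)) (X Y : Finset V) :
    dIn E (X ∩ Y) + dIn E (X ∪ Y) ≤ dIn E X + dIn E Y := by
  unfold dIn
  rw [card_filter, card_filter, card_filter, card_filter,
    ← Finset.sum_add_distrib, ← Finset.sum_add_distrib]
  refine Finset.sum_le_sum fun e _ => ?_
  by_cases h1 : e.1.2 ∈ X <;> by_cases h2 : e.1.2 ∈ Y <;>
    by_cases h3 : e.1.1 ∈ X <;> by_cases h4 : e.1.1 ∈ Y <;>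
    simp [Finset.mem_inter, Finset.mem_union, h1, h2, h3, h4]

lemma need_supermod (R1 R2 X Y : Finset V) :
    need R1 R2 X + need R1 R2 Y ≤ need R1 R2 (X ∩ Y) + need R1 R2 (X ∪ Y) := by
  unfold need
  have key : ∀ R : Finset V, (if X ∩ R = ∅ then 1 else 0) + (if Y ∩ R = ∅ then 1 else 0) ≤
      (if (X ∩ Y) ∩ R = ∅ then 1 else 0) + (if (X ∪ Y) ∩ R = ∅ then (1 : ℕ) else 0) := by
    intro R
    have hu : (X ∪ Y) ∩ R = (X ∩ R) ∪ (Y ∩ R) := union_inter_distrib_right X Y R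
    by_cases hx : X ∩ R = ∅
    · have hz : (X ∩ Y) ∩ R = ∅ := by
        rw [← subset_empty, ← hx]
        exact inter_subset_inter (inter_subset_left) (Subset.refl R)
      by_cases hy : Y ∩ R = ∅
      · have hw : (X ∪ Y) ∩ R = ∅ := by rw [hu, hx, hy, union_empty]
        simp [hx, hy, hz, hw]
      · simp [hx, hy, hz]
    · by_cases hy : Y ∩ R = ∅
      · have hz : (X ∩ Y) ∩ R = ∅ := by
          rw [← subset_empty, ← hy]
          exact inter_subset_inter (inter_subset_right) (Subset.refl R)
        simp [hx, hy, hz]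
      · simp [hx, hy]
  have k1 := key R1
  have k2 := key R2
  omega

lemma dIn_erase_le (E : Finset ((V × V) × Bool)) (e : (V × V) × Bool) (X : Finset V) :
    dIn E X ≤ dIn (E.erase e) X + (if e.1.2 ∈ X ∧ e.1.1 ∉ X then 1 else 0) := by
  by_cases h : e.1.2 ∈ X ∧ e.1.1 ∉ X
  · rw [if_pos h]
    have hsub : E.filter (fun f => f.1.2 ∈ X ∧ f.1.1 ∉ X) ⊆
        insert e ((E.erase e).filter (fun f => f.1.2 ∈ X ∧ f.1.1 ∉ X)) := by
      intro f hf
      rcases mem_filter.1 hf with ⟨hfE, hfp⟩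
      by_cases hfe : f = e
      · exact mem_insert.2 (Or.inl hfe)
      · exact mem_insert.2 (Or.inr (mem_filter.2 ⟨mem_erase.2 ⟨hfe, hfE⟩, hfp⟩))
    calc dIn E X ≤ _ := card_le_card hsub
    _ ≤ _ := card_insert_le _ _
  · rw [if_neg h, add_zero]
    refine card_le_card fun f hf => ?_
    rcases mem_filter.1 hf with ⟨hfE, hfp⟩
    have hfe : f ≠ e := fun hfe => h (hfe ▸ hfp)
    exact mem_filter.2 ⟨mem_erase.2 ⟨hfe, hfE⟩, hfp⟩

lemma dIn_erase_le' (E : Finset ((V × V) × Bool)) (e : (V × V) × Bool) (X : Finset V) :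
    dIn (E.erase e) X ≤ dIn E X :=
  card_le_card (filter_subset_filter _ (erase_subset _ _))

lemma dIn_sdiff_le (E : Finset ((V × V) × Bool)) (X R : Finset V) :
    dIn E (X \ R) ≤ dIn E X + (E.filter (fun e => e.1.1 ∈ X ∩ R ∧ e.1.2 ∈ X \ R)).card := by
  have hsub : E.filter (fun e => e.1.2 ∈ X \ R ∧ e.1.1 ∉ X \ R) ⊆
      (E.filter (fun e => e.1.2 ∈ X ∧ e.1.1 ∉ X)) ∪
      (E.filter (fun e => e.1.1 ∈ X ∩ R ∧ e.1.2 ∈ X \ R)) := by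
    intro f hf
    rcases mem_filter.1 hf with ⟨hfE, hf2, hf1⟩
    rcases mem_sdiff.1 hf2 with ⟨hf2X, hf2R⟩
    by_cases h1X : f.1.1 ∈ X
    · have h1R : f.1.1 ∈ R := by
        by_contra h1R
        exact hf1 (mem_sdiff.2 ⟨h1X, h1R⟩)
      exact mem_union_right _ (mem_filter.2 ⟨hfE, mem_inter.2 ⟨h1X, h1R⟩, hf2⟩)
    · exact mem_union_left _ (mem_filter.2 ⟨hfE, hf2X, h1X⟩)
  calc dIn E (X \ R) ≤ _ := card_le_card hsub
  _ ≤ _ := card_union_le _ _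

lemma blocker_of {E : Finset ((V × V) × Bool)} {R1 R2 : Finset V} {e : (V × V) × Bool}
    (hc : Cond E R1 R2)
    (hnc : ¬ Cond (E.erase e) (insert e.1.2 R1) R2) :
    ∃ Y : Finset V, dIn E Y = need R1 R2 Y ∧ e.1.2 ∈ Y ∧ e.1.1 ∉ Y ∧ (Y ∩ R1).Nonempty := by
  unfold Cond at hnc
  push_neg at hnc
  obtain ⟨Y, hYne, hlt⟩ := hnc
  have hEY : need R1 R2 Y ≤ dIn E Y := hc Y hYne
  have hle := dIn_erase_le E e Y
  -- need for the modified problem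
  have hterm2 : need (insert e.1.2 R1) R2 Y =
      (if Y ∩ insert e.1.2 R1 = ∅ then 1 else 0) + (if Y ∩ R2 = ∅ then 1 else 0) := rfl
  have hneedY : need R1 R2 Y = (if Y ∩ R1 = ∅ then 1 else 0) + (if Y ∩ R2 = ∅ then 1 else 0) := rfl
  have hmono : (if Y ∩ insert e.1.2 R1 = ∅ then (1:ℕ) else 0) ≤ (if Y ∩ R1 = ∅ then 1 else 0) := by
    by_cases h : Y ∩ insert e.1.2 R1 = ∅
    · have : Y ∩ R1 = ∅ := by
        rw [← subset_empty, ← h]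
        exact inter_subset_inter (Subset.refl Y) (subset_insert _ _)
      simp [h, this]
    · by_cases h2 : Y ∩ R1 = ∅ <;> simp [h, h2]
  -- first, e must enter Y
  have henter : e.1.2 ∈ Y ∧ e.1.1 ∉ Y := by
    by_contra hnenter
    rw [if_neg hnenter, add_zero] at hle
    omega
  have hY2 : Y ∩ insert e.1.2 R1 ≠ ∅ := by
    intro hempty
    have : e.1.2 ∈ Y ∩ insert e.1.2 R1 := mem_inter.2 ⟨henter.1, mem_insert_self _ _⟩
    rw [hempty] at this
    exact absurd this (notMem_empty _)
  rw [if_pos henter] at hle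
  rw [hterm2, if_neg hY2, zero_add] at hlt
  -- dIn E Y ≤ dIn erase + 1 ≤ t2 ≤ need Y ≤ dIn E Y
  have ht1 : (if Y ∩ R1 = ∅ then (1:ℕ) else 0) = 0 := by omega
  have hR1ne : Y ∩ R1 ≠ ∅ := by
    intro h; rw [if_pos h] at ht1; omega
  exact ⟨Y, by omega, henter.1, henter.2, nonempty_iff_ne_empty.2 hR1ne⟩

lemma grow {E : Finset ((V × V) × Bool)} {R1 R2 : Finset V} (hc : Cond E R1 R2)
    (h1 : R1 ≠ univ) :
    ∃ e ∈ E, e.1.1 ∈ R1 ∧ e.1.2 ∉ R1 ∧ Cond (E.erase e) (insert e.1.2 R1) R2 := by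
  by_contra hcon
  push_neg at hcon
  have hW : (univ \ R1).Nonempty := by
    rw [sdiff_nonempty]
    exact fun h => h1 (univ_subset_iff.1 h)
  have hWR1 : (univ \ R1) ∩ R1 = ∅ := sdiff_inter_self _ _
  -- there is a good arc e0
  have hdW : 1 ≤ dIn E (univ \ R1) := by
    have h := hc (univ \ R1) hW
    unfold need at h
    rw [if_pos hWR1] at h
    omega
  obtain ⟨e0, he0⟩ := card_pos.1 (by omega : 0 < dIn E (univ \ R1))
  rcases mem_filter.1 he0 with ⟨he0E, he02, he01⟩
  have he0h : e0.1.2 ∉ R1 := (mem_sdiff.1 he02).2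
  have he0t : e0.1.1 ∈ R1 := by
    by_contra h
    exact he01 (mem_sdiff.2 ⟨mem_univ _, h⟩)
  obtain ⟨Y0, hY0t, hY0h, hY0tl, hY0R1⟩ := blocker_of hc (hcon e0 he0E he0t he0h)
  -- the family of tight sets
  set F := (univ : Finset V).powerset.filter (fun X => dIn E X = need R1 R2 X ∧
      (X ∩ R1).Nonempty ∧ (X \ R1).Nonempty) with hF
  have hY0F : Y0 ∈ F := mem_filter.2 ⟨mem_powerset.2 (subset_univ _), hY0t, hY0R1,
    ⟨e0.1.2, mem_sdiff.2 ⟨hY0h, he0h⟩⟩⟩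
  obtain ⟨X, hXF, hXmin⟩ := F.exists_min_image card ⟨Y0, hY0F⟩
  rcases mem_filter.1 hXF with ⟨-, hXt, hXR1, hXd⟩
  -- find a good arc inside X
  have hneedd : need R1 R2 (X \ R1) ≤ dIn E (X \ R1) := hc _ hXd
  have hsplit := dIn_sdiff_le E X R1
  have hdne : (X \ R1) ∩ R1 = ∅ := sdiff_inter_self _ _
  have hXR1' : X ∩ R1 ≠ ∅ := nonempty_iff_ne_empty.1 hXR1
  have hmon2 : (if X ∩ R2 = ∅ then (1:ℕ) else 0) ≤ (if (X \ R1) ∩ R2 = ∅ then 1 else 0) := by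
    by_cases h : X ∩ R2 = ∅
    · have h' : (X \ R1) ∩ R2 = ∅ := by
        rw [← subset_empty, ← h]
        exact inter_subset_inter (sdiff_subset) (Subset.refl _)
      simp [h, h']
    · by_cases h' : (X \ R1) ∩ R2 = ∅ <;> simp [h, h']
  have hKpos : 0 < (E.filter (fun e => e.1.1 ∈ X ∩ R1 ∧ e.1.2 ∈ X \ R1)).card := by
    unfold need at hneedd hXt
    rw [if_pos hdne] at hneedd
    rw [if_neg hXR1'] at hXt
    omega
  obtain ⟨f, hf⟩ := card_pos.1 hKpos
  rcases mem_filter.1 hf with ⟨hfE, hf1, hf2⟩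
  have hf2X : f.1.2 ∈ X := (mem_sdiff.1 hf2).1
  have hf2R1 : f.1.2 ∉ R1 := (mem_sdiff.1 hf2).2
  obtain ⟨Y, hYt, hYhead, hYtail, hYR1⟩ :=
    blocker_of hc (hcon f hfE (mem_inter.1 hf1).2 hf2R1)
  set Z := X ∩ Y with hZ
  set U := X ∪ Y with hU
  have hZhead : f.1.2 ∈ Z := mem_inter.2 ⟨hf2X, hYhead⟩
  have s1 : need R1 R2 Z ≤ dIn E Z := hc Z ⟨_, hZhead⟩
  have s2 : need R1 R2 U ≤ dIn E U := hc U ⟨f.1.2, mem_union_left _ hf2X⟩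
  have s3 := dIn_submod E X Y
  have s4 := need_supermod R1 R2 X Y
  rw [← hZ, ← hU] at s3 s4
  have hZt : dIn E Z = need R1 R2 Z := by omega
  have heq : need R1 R2 X + need R1 R2 Y = need R1 R2 Z + need R1 R2 U := by omega
  by_cases hZR1 : (Z ∩ R1).Nonempty
  · have hZF : Z ∈ F := mem_filter.2 ⟨mem_powerset.2 (subset_univ _), hZt, hZR1,
      ⟨f.1.2, mem_sdiff.2 ⟨hZhead, hf2R1⟩⟩⟩
    have hZss : Z ⊂ X := by
      rw [Finset.ssubset_def]
      refine ⟨inter_subset_left, fun hsub => ?_⟩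
      exact hYtail (mem_inter.1 (hsub (mem_inter.1 hf1).1)).2
    have h5 := hXmin Z hZF
    have h6 := card_lt_card hZss
    omega
  · have hZR1' : Z ∩ R1 = ∅ := not_nonempty_iff_eq_empty.1 hZR1
    have hYR1' : Y ∩ R1 ≠ ∅ := nonempty_iff_ne_empty.1 hYR1
    have hUR1' : U ∩ R1 ≠ ∅ := by
      intro h
      apply hXR1'
      rw [← subset_empty, ← h]
      exact inter_subset_inter subset_union_left (Subset.refl _)
    unfold need at heq
    rw [if_neg hXR1', if_neg hYR1', if_pos hZR1', if_neg hUR1'] at heq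
    have hdistr : U ∩ R2 = (X ∩ R2) ∪ (Y ∩ R2) := union_inter_distrib_right X Y R2
    by_cases ha : X ∩ R2 = ∅ <;> by_cases hb : Y ∩ R2 = ∅
    · have hw : U ∩ R2 = ∅ := by rw [hdistr, ha, hb, union_empty]
      have hz : Z ∩ R2 = ∅ := by
        rw [← subset_empty, ← ha]
        exact inter_subset_inter inter_subset_left (Subset.refl _)
      rw [if_pos ha, if_pos hb, if_pos hz, if_pos hw] at heq
      omega
    · have hz : Z ∩ R2 = ∅ := by
        rw [← subset_empty, ← ha]
        exact inter_subset_inter inter_subset_left (Subset.refl _)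
      have hw : U ∩ R2 ≠ ∅ := by
        intro h
        apply hb
        rw [← subset_empty, ← h, hdistr]
        exact subset_union_right
      rw [if_pos ha, if_neg hb, if_pos hz, if_neg hw] at heq
      omega
    · have hz : Z ∩ R2 = ∅ := by
        rw [← subset_empty, ← hb]
        exact inter_subset_inter inter_subset_right (Subset.refl _)
      have hw : U ∩ R2 ≠ ∅ := by
        intro h
        apply ha
        rw [← subset_empty, ← h, hdistr]
        exact subset_union_left
      rw [if_neg ha, if_pos hb, if_pos hz, if_neg hw] at heq
      omega
    · have hw : U ∩ R2 ≠ ∅ := by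
        intro h
        apply ha
        rw [← subset_empty, ← h, hdistr]
        exact subset_union_left
      rw [if_neg ha, if_neg hb, if_neg hw] at heq
      split_ifs at heq <;> omega

lemma not_hasCycle_empty : ¬ HasCycle (∅ : Finset (V × V)) := by
  rintro ⟨n, f, hf⟩
  exact notMem_empty _ (hf 0)

lemma extend_branching {C : Finset ((V × V) × Bool)} {R : Finset V} {e : (V × V) × Bool}
    (ht : e.1.1 ∈ R) (hh : e.1.2 ∉ R)
    (hinj : ∀ a ∈ C, ∀ b ∈ C, a.1.2 = b.1.2 → a = b)
    (hcyc : ¬ HasCycle (C.image Prod.fst))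
    (hroot : rootSet (C.image Prod.fst) = insert e.1.2 R) :
    (∀ a ∈ insert e C, ∀ b ∈ insert e C, a.1.2 = b.1.2 → a = b) ∧
    ¬ HasCycle ((insert e C).image Prod.fst) ∧
    rootSet ((insert e C).image Prod.fst) = R := by
  have hynot : ∀ a ∈ C, a.1.2 ≠ e.1.2 := by
    intro a ha
    have : e.1.2 ∈ rootSet (C.image Prod.fst) := hroot ▸ mem_insert_self _ _
    exact fun hcontra => (mem_rootSet.1 this) a.1 (mem_image_of_mem _ ha) hcontra
  have he1root : e.1.1 ∈ rootSet (C.image Prod.fst) := hroot ▸ mem_insert_of_mem ht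
  have hne : e.1.1 ≠ e.1.2 := fun h => hh (h ▸ ht)
  refine ⟨?_, ?_, ?_⟩
  · intro a ha b hb hab
    rcases mem_insert.1 ha with hae | haC <;> rcases mem_insert.1 hb with hbe | hbC
    · rw [hae, hbe]
    · exact absurd (by rw [← hab, hae] : b.1.2 = e.1.2) (hynot b hbC)
    · exact absurd (by rw [hab, hbe] : a.1.2 = e.1.2) (hynot a haC)
    · exact hinj a haC b hbC hab
  · rw [image_insert]
    exact no_cycle_insert hcyc he1root hne
  · rw [image_insert, rootSet_insert, hroot, erase_insert hh]

lemma edmonds : ∀ (N : ℕ) (E : Finset ((V × V) × Bool)) (R1 R2 : Finset V),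
    (univ \ R1).card + (univ \ R2).card ≤ N → Cond E R1 R2 →
    ∃ C1 C2 : Finset ((V × V) × Bool), C1 ⊆ E ∧ C2 ⊆ E ∧ Disjoint C1 C2 ∧
      (∀ a ∈ C1, ∀ b ∈ C1, a.1.2 = b.1.2 → a = b) ∧
      ¬ HasCycle (C1.image Prod.fst) ∧ rootSet (C1.image Prod.fst) = R1 ∧
      (∀ a ∈ C2, ∀ b ∈ C2, a.1.2 = b.1.2 → a = b) ∧
      ¬ HasCycle (C2.image Prod.fst) ∧ rootSet (C2.image Prod.fst) = R2 := by
  intro N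
  induction N with
  | zero =>
    intro E R1 R2 hN _
    have h1 : R1 = univ := by
      have h : (univ \ R1).card = 0 := by omega
      rw [card_eq_zero, sdiff_eq_empty_iff_subset] at h
      exact univ_subset_iff.1 h
    have h2 : R2 = univ := by
      have h : (univ \ R2).card = 0 := by omega
      rw [card_eq_zero, sdiff_eq_empty_iff_subset] at h
      exact univ_subset_iff.1 h
    subst h1; subst h2
    exact ⟨∅, ∅, empty_subset _, empty_subset _, disjoint_empty_left _,
      fun a ha => absurd ha (notMem_empty _),
      by rw [image_empty]; exact not_hasCycle_empty,
      by rw [image_empty]; exact rootSet_empty,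
      fun a ha => absurd ha (notMem_empty _),
      by rw [image_empty]; exact not_hasCycle_empty,
      by rw [image_empty]; exact rootSet_empty⟩
  | succ N ih =>
    intro E R1 R2 hN hc
    by_cases h1 : R1 = univ
    · by_cases h2 : R2 = univ
      · subst h1; subst h2
        exact ⟨∅, ∅, empty_subset _, empty_subset _, disjoint_empty_left _,
          fun a ha => absurd ha (notMem_empty _),
          by rw [image_empty]; exact not_hasCycle_empty,
          by rw [image_empty]; exact rootSet_empty,
          fun a ha => absurd ha (notMem_empty _),
          by rw [image_empty]; exact not_hasCycle_empty,
          by rw [image_empty]; exact rootSet_empty⟩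
      · obtain ⟨e, heE, het, heh, hc'⟩ := grow (cond_symm.1 hc) h2
        have hmeas : (univ \ R1).card + (univ \ insert e.1.2 R2).card ≤ N := by
          have h : univ \ insert e.1.2 R2 = (univ \ R2).erase e.1.2 := by
            rw [sdiff_insert]
          have hmem : e.1.2 ∈ univ \ R2 := mem_sdiff.2 ⟨mem_univ _, heh⟩
          have := card_erase_of_mem hmem
          have hpos : 1 ≤ (univ \ R2).card := card_pos.2 ⟨_, hmem⟩
          rw [h, this]
          omega
        obtain ⟨C1, C2', hs1, hs2, hdisj, hi1, hcy1, hr1, hi2, hcy2, hr2⟩ :=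
          ih (E.erase e) R1 (insert e.1.2 R2) hmeas (cond_symm.1 hc')
        obtain ⟨hi2', hcy2', hr2'⟩ := extend_branching het heh hi2 hcy2 hr2
        refine ⟨C1, insert e C2', hs1.trans (erase_subset _ _), ?_, ?_, hi1, hcy1, hr1,
          hi2', hcy2', hr2'⟩
        · exact insert_subset heE (hs2.trans (erase_subset _ _))
        · rw [disjoint_comm, disjoint_insert_left]
          exact ⟨fun hmem => notMem_erase e E (hs1 hmem), (disjoint_comm.1 hdisj)⟩
    · obtain ⟨e, heE, het, heh, hc'⟩ := grow hc h1
      have hmeas : (univ \ insert e.1.2 R1).card + (univ \ R2).card ≤ N := by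
        have h : univ \ insert e.1.2 R1 = (univ \ R1).erase e.1.2 := by
          rw [sdiff_insert]
        have hmem : e.1.2 ∈ univ \ R1 := mem_sdiff.2 ⟨mem_univ _, heh⟩
        have := card_erase_of_mem hmem
        have hpos : 1 ≤ (univ \ R1).card := card_pos.2 ⟨_, hmem⟩
        rw [h, this]
        omega
      obtain ⟨C1', C2, hs1, hs2, hdisj, hi1, hcy1, hr1, hi2, hcy2, hr2⟩ :=
        ih (E.erase e) (insert e.1.2 R1) R2 hmeas hc'
      obtain ⟨hi1', hcy1', hr1'⟩ := extend_branching het heh hi1 hcy1 hr1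
      refine ⟨insert e C1', C2, ?_, hs2.trans (erase_subset _ _), ?_, hi1', hcy1', hr1',
        hi2, hcy2, hr2⟩
      · exact insert_subset heE (hs1.trans (erase_subset _ _))
      · rw [disjoint_insert_left]
        exact ⟨fun hmem => notMem_erase e E (hs2 hmem), hdisj⟩

lemma convert_branching {A B1 B2 : Finset (V × V)} (hA1 : B1 ⊆ A) (hA2 : B2 ⊆ A)
    {E : Finset ((V × V) × Bool)} (hE : ∀ e ∈ E, e.1 ∈ B1 ∨ e.1 ∈ B2)
    {C : Finset ((V × V) × Bool)} (hCE : C ⊆ E)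
    (hinj : ∀ a ∈ C, ∀ b ∈ C, a.1.2 = b.1.2 → a = b)
    (hcyc : ¬ HasCycle (C.image Prod.fst)) :
    IsBranching A (C.image Prod.fst) := by
  refine ⟨?_, ?_, hcyc⟩
  · intro p hp
    obtain ⟨e, heC, hep⟩ := mem_image.1 hp
    rcases hE e (hCE heC) with h | h
    · exact hA1 (hep ▸ h)
    · exact hA2 (hep ▸ h)
  · intro v
    rw [card_le_one]
    intro p hp q hq
    rcases mem_filter.1 hp with ⟨hpim, hpv⟩
    rcases mem_filter.1 hq with ⟨hqim, hqv⟩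
    obtain ⟨e, heC, hep⟩ := mem_image.1 hpim
    obtain ⟨f, hfC, hfq⟩ := mem_image.1 hqim
    have : e = f := hinj e heC f hfC (by rw [hep, hfq, hpv, hqv])
    rw [← hep, ← hfq, this]

lemma sum_image_fst_le {w : V × V → ℤ} (hw : ∀ a, 0 ≤ w a) (C : Finset ((V × V) × Bool)) :
    ∑ p ∈ C.image Prod.fst, w p ≤ ∑ e ∈ C, w e.1 := by
  induction C using Finset.induction_on with
  | empty => simp
  | @insert a s hnotmem ih =>
    rw [image_insert, sum_insert hnotmem]
    by_cases h : a.1 ∈ s.image Prod.fst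
    · rw [insert_eq_self.2 h]
      calc ∑ p ∈ s.image Prod.fst, w p ≤ ∑ e ∈ s, w e.1 := ih
      _ ≤ w a.1 + ∑ e ∈ s, w e.1 := le_add_of_nonneg_left (hw _)
    · rw [sum_insert h]
      exact add_le_add (le_refl _) ih

lemma exchange {A : Finset (V × V)} {w : V × V → ℤ} (hw : ∀ a, 0 ≤ w a)
    {B1 B2 : Finset (V × V)} (hB1 : IsBranching A B1) (hB2 : IsBranching A B2)
    {u : V} (hu1 : u ∈ rootSet B1) (hu2 : u ∉ rootSet B2) :
    (∃ C1 C2 : Finset (V × V), IsBranching A C1 ∧ IsBranching A C2 ∧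
      rootSet C1 = (rootSet B1).erase u ∧ rootSet C2 = insert u (rootSet B2) ∧
      ∑ a ∈ C1, w a + ∑ a ∈ C2, w a ≤ ∑ a ∈ B1, w a + ∑ a ∈ B2, w a) ∨
    (∃ v, v ∈ rootSet B2 ∧ v ∉ rootSet B1 ∧ ∃ C1 C2 : Finset (V × V),
      IsBranching A C1 ∧ IsBranching A C2 ∧
      rootSet C1 = insert v ((rootSet B1).erase u) ∧
      rootSet C2 = (insert u (rootSet B2)).erase v ∧
      ∑ a ∈ C1, w a + ∑ a ∈ C2, w a ≤ ∑ a ∈ B1, w a + ∑ a ∈ B2, w a) := by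
  classical
  set S := rootSet B1 with hS
  set T := rootSet B2 with hT
  set E := B1.image (fun a => (a, false)) ∪ B2.image (fun a => (a, true)) with hE
  have hmemE : ∀ e : (V × V) × Bool, e ∈ E ↔
      (e.2 = false ∧ e.1 ∈ B1) ∨ (e.2 = true ∧ e.1 ∈ B2) := by
    intro e
    constructor
    · intro he
      rcases mem_union.1 he with h | h
      · obtain ⟨a, ha, hea⟩ := mem_image.1 h
        exact Or.inl ⟨by rw [← hea], by rw [← hea]; exact ha⟩
      · obtain ⟨a, ha, hea⟩ := mem_image.1 h
        exact Or.inr ⟨by rw [← hea], by rw [← hea]; exact ha⟩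
    · rintro (⟨hb, hp⟩ | ⟨hb, hp⟩)
      · exact mem_union_left _ (mem_image.2 ⟨e.1, hp, Prod.ext rfl hb.symm⟩)
      · exact mem_union_right _ (mem_image.2 ⟨e.1, hp, Prod.ext rfl hb.symm⟩)
  have hEor : ∀ e ∈ E, e.1 ∈ B1 ∨ e.1 ∈ B2 := by
    intro e he
    rcases (hmemE e).1 he with ⟨_, h⟩ | ⟨_, h⟩
    · exact Or.inl h
    · exact Or.inr h
  -- entering arcs from closedness
  have henterB1 : ∀ X : Finset V, X.Nonempty → X ∩ S = ∅ →
      ∃ a ∈ B1, a.2 ∈ X ∧ a.1 ∉ X := by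
    intro X hXne hXS
    by_contra hno
    push_neg at hno
    obtain ⟨r, hrX, hrS⟩ := exists_root_of_closed hB1.2.2 hXne hno
    have : r ∈ X ∩ S := mem_inter.2 ⟨hrX, hrS⟩
    rw [hXS] at this
    exact notMem_empty _ this
  have henterB2 : ∀ X : Finset V, X.Nonempty → X ∩ T = ∅ →
      ∃ a ∈ B2, a.2 ∈ X ∧ a.1 ∉ X := by
    intro X hXne hXT
    by_contra hno
    push_neg at hno
    obtain ⟨r, hrX, hrT⟩ := exists_root_of_closed hB2.2.2 hXne hno
    have : r ∈ X ∩ T := mem_inter.2 ⟨hrX, hrT⟩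
    rw [hXT] at this
    exact notMem_empty _ this
  have hd1S : ∀ X : Finset V, X.Nonempty → X ∩ S = ∅ → 1 ≤ dIn E X := by
    intro X hXne hXS
    obtain ⟨a, haB, ha2, ha1⟩ := henterB1 X hXne hXS
    exact one_le_dIn ((hmemE (a, false)).2 (Or.inl ⟨rfl, haB⟩)) ha2 ha1
  have hd1T : ∀ X : Finset V, X.Nonempty → X ∩ T = ∅ → 1 ≤ dIn E X := by
    intro X hXne hXT
    obtain ⟨a, haB, ha2, ha1⟩ := henterB2 X hXne hXT
    exact one_le_dIn ((hmemE (a, true)).2 (Or.inr ⟨rfl, haB⟩)) ha2 ha1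
  have hd2 : ∀ X : Finset V, X.Nonempty → X ∩ S = ∅ → X ∩ T = ∅ → 2 ≤ dIn E X := by
    intro X hXne hXS hXT
    obtain ⟨a, haB, ha2, ha1⟩ := henterB1 X hXne hXS
    obtain ⟨b, hbB, hb2, hb1⟩ := henterB2 X hXne hXT
    refine two_le_dIn ((hmemE (a, false)).2 (Or.inl ⟨rfl, haB⟩)) ha2 ha1
      ((hmemE (b, true)).2 (Or.inr ⟨rfl, hbB⟩)) hb2 hb1 ?_
    intro h
    exact Bool.noConfusion (congrArg Prod.snd h)
  have hSempty : ∀ X : Finset V, u ∉ X → X ∩ S.erase u = ∅ → X ∩ S = ∅ := by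
    intro X huX hXe
    rw [eq_empty_iff_forall_notMem] at hXe ⊢
    intro a ha
    rcases mem_inter.1 ha with ⟨haX, haS⟩
    by_cases hau : a = u
    · exact huX (hau ▸ haX)
    · exact hXe a (mem_inter.2 ⟨haX, mem_erase.2 ⟨hau, haS⟩⟩)
  -- weight transfer
  have hWE : ∑ e ∈ E, w e.1 = ∑ a ∈ B1, w a + ∑ a ∈ B2, w a := by
    rw [hE, sum_union, sum_image, sum_image]
    · intro x _ y _ h
      exact congrArg Prod.fst h
    · intro x _ y _ h
      exact congrArg Prod.fst h
    · rw [disjoint_left]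
      intro e he1 he2
      obtain ⟨a, _, hea⟩ := mem_image.1 he1
      obtain ⟨b, _, heb⟩ := mem_image.1 he2
      rw [← hea] at heb
      exact Bool.noConfusion (congrArg Prod.snd heb)
  have hweight : ∀ C1 C2 : Finset ((V × V) × Bool), C1 ⊆ E → C2 ⊆ E → Disjoint C1 C2 →
      ∑ p ∈ C1.image Prod.fst, w p + ∑ p ∈ C2.image Prod.fst, w p ≤
        ∑ a ∈ B1, w a + ∑ a ∈ B2, w a := by
    intro C1 C2 h1 h2 hd
    calc ∑ p ∈ C1.image Prod.fst, w p + ∑ p ∈ C2.image Prod.fst, w p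
        ≤ ∑ e ∈ C1, w e.1 + ∑ e ∈ C2, w e.1 :=
          add_le_add (sum_image_fst_le hw C1) (sum_image_fst_le hw C2)
      _ = ∑ e ∈ C1 ∪ C2, w e.1 := (sum_union hd).symm
      _ ≤ ∑ e ∈ E, w e.1 :=
          sum_le_sum_of_subset_of_nonneg (union_subset h1 h2) (fun e _ _ => hw e.1)
      _ = _ := hWE
  by_cases hcond : Cond E (S.erase u) (insert u T)
  · obtain ⟨C1, C2, hs1, hs2, hdisj, hi1, hcy1, hr1, hi2, hcy2, hr2⟩ :=
      edmonds ((univ \ S.erase u).card + (univ \ insert u T).card) E _ _ le_rfl hcond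
    left
    exact ⟨C1.image Prod.fst, C2.image Prod.fst,
      convert_branching hB1.1 hB2.1 hEor hs1 hi1 hcy1,
      convert_branching hB1.1 hB2.1 hEor hs2 hi2 hcy2,
      hr1, hr2, hweight C1 C2 hs1 hs2 hdisj⟩
  · -- extract the obstruction
    unfold Cond at hcond
    push_neg at hcond
    obtain ⟨X, hXne, hlt⟩ := hcond
    have hXfacts : dIn E X = 0 ∧ u ∈ X ∧ X ∩ S = {u} := by
      unfold need at hlt
      have h2ne : X ∩ insert u T ≠ ∅ := by
        intro h2
        have huX : u ∉ X := by
          intro huX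
          have : u ∈ X ∩ insert u T := mem_inter.2 ⟨huX, mem_insert_self _ _⟩
          rw [h2] at this
          exact notMem_empty _ this
        have hXT : X ∩ T = ∅ := by
          rw [← subset_empty, ← h2]
          exact inter_subset_inter (Subset.refl _) (subset_insert _ _)
        by_cases h1 : X ∩ S.erase u = ∅
        · have := hd2 X hXne (hSempty X huX h1) hXT
          rw [if_pos h1, if_pos h2] at hlt
          omega
        · have := hd1T X hXne hXT
          rw [if_neg h1, if_pos h2] at hlt
          omega
      rw [if_neg h2ne] at hlt
      have h1e : X ∩ S.erase u = ∅ := by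
        by_contra h1
        rw [if_neg h1] at hlt
        omega
      rw [if_pos h1e] at hlt
      have hdX : dIn E X = 0 := by omega
      have huX : u ∈ X := by
        by_contra huX
        have := hd1S X hXne (hSempty X huX h1e)
        omega
      refine ⟨hdX, huX, ?_⟩
      ext a
      simp only [mem_inter, mem_singleton]
      constructor
      · rintro ⟨haX, haS⟩
        by_contra hau
        have : a ∈ X ∩ S.erase u := mem_inter.2 ⟨haX, mem_erase.2 ⟨hau, haS⟩⟩
        rw [h1e] at this
        exact notMem_empty _ this
      · rintro rfl
        exact ⟨huX, hu1⟩
    -- minimal such set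
    set F0 := (univ : Finset V).powerset.filter
      (fun Z => dIn E Z = 0 ∧ u ∈ Z ∧ Z ∩ S = {u}) with hF0
    have hXF0 : X ∈ F0 := mem_filter.2 ⟨mem_powerset.2 (subset_univ _), hXfacts⟩
    obtain ⟨X0, hX0F, hX0min⟩ := F0.exists_min_image card ⟨X, hXF0⟩
    rcases mem_filter.1 hX0F with ⟨-, hX0d, hX0u, hX0S⟩
    have hX0T : (X0 ∩ T).Nonempty := by
      rw [nonempty_iff_ne_empty]
      intro h
      have := hd1T X0 ⟨u, hX0u⟩ h
      omega
    obtain ⟨v0, hv0⟩ := hX0T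
    rcases mem_inter.1 hv0 with ⟨hv0X0, hv0T⟩
    have hv0u : v0 ≠ u := fun h => hu2 (h ▸ hv0T)
    have hv0S : v0 ∉ S := by
      intro h
      have : v0 ∈ X0 ∩ S := mem_inter.2 ⟨hv0X0, h⟩
      rw [hX0S] at this
      exact hv0u (mem_singleton.1 this)
    have hdint : ∀ P Q : Finset V, dIn E P = 0 → dIn E Q = 0 → dIn E (P ∩ Q) = 0 := by
      intro P Q hP hQ
      rw [dIn_zero_iff] at hP hQ ⊢
      intro e he h2
      exact mem_inter.2 ⟨hP e he (mem_inter.1 h2).1, hQ e he (mem_inter.1 h2).2⟩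
    -- second condition
    have hcond2 : Cond E (insert v0 (S.erase u)) ((insert u T).erase v0) := by
      intro Y hYne
      by_contra hlt2
      rw [not_le] at hlt2
      unfold need at hlt2
      have hu_in_R2' : u ∈ (insert u T).erase v0 :=
        mem_erase.2 ⟨fun h => hv0u h.symm, mem_insert_self _ _⟩
      by_cases h2 : Y ∩ (insert u T).erase v0 = ∅
      · have huY : u ∉ Y := by
          intro huY
          have : u ∈ Y ∩ (insert u T).erase v0 := mem_inter.2 ⟨huY, hu_in_R2'⟩
          rw [h2] at this
          exact notMem_empty _ this
        have hYT : Y ∩ T ⊆ {v0} := by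
          intro a ha
          rcases mem_inter.1 ha with ⟨haY, haT⟩
          rw [mem_singleton]
          by_contra hav0
          have : a ∈ Y ∩ (insert u T).erase v0 :=
            mem_inter.2 ⟨haY, mem_erase.2 ⟨hav0, mem_insert_of_mem haT⟩⟩
          rw [h2] at this
          exact notMem_empty _ this
        by_cases hYT0 : Y ∩ T = ∅
        · -- dIn ≥ 1 or 2
          by_cases h1 : Y ∩ insert v0 (S.erase u) = ∅
          · have hYSe : Y ∩ S.erase u = ∅ := by
              rw [← subset_empty, ← h1]
              exact inter_subset_inter (Subset.refl _) (subset_insert _ _)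
            have := hd2 Y hYne (hSempty Y huY hYSe) hYT0
            rw [if_pos h1, if_pos h2] at hlt2
            omega
          · have := hd1T Y hYne hYT0
            rw [if_neg h1, if_pos h2] at hlt2
            omega
        · -- v0 ∈ Y, so dIn Y = 0, intersect with X0
          have hv0Y : v0 ∈ Y := by
            obtain ⟨a, ha⟩ := nonempty_iff_ne_empty.2 hYT0
            have := hYT ha
            rw [mem_singleton] at this
            exact this ▸ (mem_inter.1 ha).1
          have h1 : Y ∩ insert v0 (S.erase u) ≠ ∅ := by
            intro h
            have : v0 ∈ Y ∩ insert v0 (S.erase u) :=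
              mem_inter.2 ⟨hv0Y, mem_insert_self _ _⟩
            rw [h] at this
            exact notMem_empty _ this
          rw [if_neg h1, if_pos h2] at hlt2
          have hdY : dIn E Y = 0 := by omega
          have hZd : dIn E (X0 ∩ Y) = 0 := hdint _ _ hX0d hdY
          have hZS : (X0 ∩ Y) ∩ S = ∅ := by
            rw [eq_empty_iff_forall_notMem]
            intro a ha
            rcases mem_inter.1 ha with ⟨haZ, haS⟩
            have : a ∈ X0 ∩ S := mem_inter.2 ⟨(mem_inter.1 haZ).1, haS⟩
            rw [hX0S, mem_singleton] at this
            exact huY (this ▸ (mem_inter.1 haZ).2)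
          have := hd1S (X0 ∩ Y) ⟨v0, mem_inter.2 ⟨hv0X0, hv0Y⟩⟩ hZS
          omega
      · -- t2 = 0, so Y ∩ R1' = ∅ and dIn Y = 0
        have h1 : Y ∩ insert v0 (S.erase u) = ∅ := by
          by_contra h1
          rw [if_neg h1, if_neg h2] at hlt2
          omega
        rw [if_pos h1, if_neg h2] at hlt2
        have hdY : dIn E Y = 0 := by omega
        have hv0Y : v0 ∉ Y := by
          intro h
          have : v0 ∈ Y ∩ insert v0 (S.erase u) := mem_inter.2 ⟨h, mem_insert_self _ _⟩
          rw [h1] at this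
          exact notMem_empty _ this
        have hYSe : Y ∩ S.erase u = ∅ := by
          rw [← subset_empty, ← h1]
          exact inter_subset_inter (Subset.refl _) (subset_insert _ _)
        have huY : u ∈ Y := by
          by_contra huY
          have := hd1S Y hYne (hSempty Y huY hYSe)
          omega
        -- X0 ∩ Y is in F0, so X0 ⊆ Y, contradiction with v0
        have hZd : dIn E (X0 ∩ Y) = 0 := hdint _ _ hX0d hdY
        have hZu : u ∈ X0 ∩ Y := mem_inter.2 ⟨hX0u, huY⟩
        have hZS : (X0 ∩ Y) ∩ S = {u} := by
          ext a
          simp only [mem_inter, mem_singleton]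
          constructor
          · rintro ⟨⟨haX0, _⟩, haS⟩
            have : a ∈ X0 ∩ S := mem_inter.2 ⟨haX0, haS⟩
            rw [hX0S, mem_singleton] at this
            exact this
          · rintro rfl
            exact ⟨mem_inter.1 hZu, hu1⟩
        have hZF0 : X0 ∩ Y ∈ F0 :=
          mem_filter.2 ⟨mem_powerset.2 (subset_univ _), hZd, hZu, hZS⟩
        have hcard := hX0min _ hZF0
        have heq : X0 ∩ Y = X0 :=
          eq_of_subset_of_card_le inter_subset_left hcard
        have : v0 ∈ X0 ∩ Y := heq.symm ▸ hv0X0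
        exact hv0Y (mem_inter.1 this).2
    obtain ⟨C1, C2, hs1, hs2, hdisj, hi1, hcy1, hr1, hi2, hcy2, hr2⟩ :=
      edmonds ((univ \ insert v0 (S.erase u)).card + (univ \ (insert u T).erase v0).card)
        E _ _ le_rfl hcond2
    right
    exact ⟨v0, hv0T, hv0S, C1.image Prod.fst, C2.image Prod.fst,
      convert_branching hB1.1 hB2.1 hEor hs1 hi1 hcy1,
      convert_branching hB1.1 hB2.1 hEor hs2 hi2 hcy2,
      hr1, hr2, hweight C1 C2 hs1 hs2 hdisj⟩

lemma gFun_of_nonneg {A : Finset (V × V)} {w : V × V → ℤ} {η : V → ℤ} (h : ∀ v, 0 ≤ η v) :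
    gFun A w η = (A.powerset.filter (fun B => IsBranching A B ∧
        rootSet B = Finset.univ.filter (fun v => 0 < η v))).inf
      (fun B => ((∑ a ∈ B, w a : ℤ) : WithTop ℤ)) := if_pos h

lemma gFun_le {A : Finset (V × V)} {w : V × V → ℤ} {η : V → ℤ} (h : ∀ v, 0 ≤ η v)
    {B : Finset (V × V)} (hB : IsBranching A B)
    (hR : rootSet B = Finset.univ.filter (fun v => 0 < η v)) :
    gFun A w η ≤ ((∑ a ∈ B, w a : ℤ) : WithTop ℤ) := by
  rw [gFun_of_nonneg h]
  exact inf_le (mem_filter.2 ⟨mem_powerset.2 hB.1, hB, hR⟩)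

lemma gFun_min {A : Finset (V × V)} {w : V × V → ℤ} {η : V → ℤ} (h : gFun A w η ≠ ⊤) :
    (∀ v, 0 ≤ η v) ∧ ∃ B, IsBranching A B ∧
      rootSet B = Finset.univ.filter (fun v => 0 < η v) ∧
      gFun A w η = ((∑ a ∈ B, w a : ℤ) : WithTop ℤ) := by
  have hpos : ∀ v, 0 ≤ η v := by
    by_contra hneg
    rw [gFun, if_neg hneg] at h
    exact h rfl
  refine ⟨hpos, ?_⟩
  rw [gFun_of_nonneg hpos] at h ⊢
  rcases (A.powerset.filter (fun B => IsBranching A B ∧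
      rootSet B = Finset.univ.filter (fun v => 0 < η v))).eq_empty_or_nonempty with he | hne
  · rw [he, inf_empty] at h
    exact absurd rfl h
  · obtain ⟨B, hBmem, hinf⟩ := exists_mem_eq_inf _ hne
      (fun B => ((∑ a ∈ B, w a : ℤ) : WithTop ℤ))
    rcases mem_filter.1 hBmem with ⟨_, hBr, hRr⟩
    exact ⟨B, hBr, hRr, hinf⟩

lemma gFun_congr {A : Finset (V × V)} {w : V × V → ℤ} {η η' : V → ℤ}
    (h : ∀ v, 0 ≤ η v) (h' : ∀ v, 0 ≤ η' v)
    (hsupp : Finset.univ.filter (fun v => 0 < η v) = Finset.univ.filter (fun v => 0 < η' v)) :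
    gFun A w η = gFun A w η' := by
  rw [gFun_of_nonneg h, gFun_of_nonneg h', hsupp]

/-- The minimum branching weight function is M♮-convex. -/
theorem gFun_Mnat_convex (A : Finset (V × V)) (w : V × V → ℤ) (hw : ∀ a, 0 ≤ w a) :
    ∀ η ζ : V → ℤ, gFun A w η ≠ ⊤ → gFun A w ζ ≠ ⊤ → ∀ u : V, ζ u < η u →
      (gFun A w (η - chi u) + gFun A w (ζ + chi u) ≤ gFun A w η + gFun A w ζ) ∨
      ∃ v : V, η v < ζ v ∧
        gFun A w (η - chi u + chi v) + gFun A w (ζ + chi u - chi v)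
          ≤ gFun A w η + gFun A w ζ := by
  intro η ζ hη hζ u hu
  obtain ⟨hηpos, B1, hB1, hR1, hg1⟩ := gFun_min hη
  obtain ⟨hζpos, B2, hB2, hR2, hg2⟩ := gFun_min hζ
  have hηu1 : 1 ≤ η u := by have := hζpos u; omega
  have happ1 : ∀ v, (η - chi u) v = η v - (if v = u then 1 else 0) := fun v => rfl
  have happ2 : ∀ v, (ζ + chi u) v = ζ v + (if v = u then 1 else 0) := fun v => rfl
  by_cases hζu : 0 < ζ u
  · -- both supports unchanged
    have hηu2 : 2 ≤ η u := by omega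
    left
    have hpos1 : ∀ v, 0 ≤ (η - chi u) v := by
      intro v
      rw [happ1]
      by_cases hv : v = u
      · subst hv; rw [if_pos rfl]; omega
      · rw [if_neg hv, sub_zero]; exact hηpos v
    have hpos2 : ∀ v, 0 ≤ (ζ + chi u) v := by
      intro v
      rw [happ2]
      have := hζpos v
      by_cases hv : v = u
      · rw [if_pos hv]; omega
      · rw [if_neg hv]; omega
    have e1 : gFun A w (η - chi u) = gFun A w η := by
      refine gFun_congr hpos1 hηpos ?_
      ext v
      simp only [mem_filter, mem_univ, true_and, happ1]
      by_cases hv : v = u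
      · subst hv; rw [if_pos rfl]; constructor <;> intro <;> omega
      · rw [if_neg hv, sub_zero]
    have e2 : gFun A w (ζ + chi u) = gFun A w ζ := by
      refine gFun_congr hpos2 hζpos ?_
      ext v
      simp only [mem_filter, mem_univ, true_and, happ2]
      by_cases hv : v = u
      · subst hv; rw [if_pos rfl]; constructor <;> intro <;> omega
      · rw [if_neg hv, add_zero]
    rw [e1, e2]
  · -- ζ u = 0
    have hζu0 : ζ u = 0 := le_antisymm (not_lt.1 hζu) (hζpos u)
    have hηupos : 0 < η u := by omega
    have huS : u ∈ Finset.univ.filter (fun v => 0 < η v) := by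
      simp only [mem_filter, mem_univ, true_and]; exact hηupos
    have huT : u ∉ Finset.univ.filter (fun v => 0 < ζ v) := by
      simp only [mem_filter, mem_univ, true_and]; omega
    have hpos2 : ∀ v, 0 ≤ (ζ + chi u) v := by
      intro v
      rw [happ2]
      have := hζpos v
      by_cases hv : v = u
      · rw [if_pos hv]; omega
      · rw [if_neg hv]; omega
    have hsupp2 : Finset.univ.filter (fun v => 0 < (ζ + chi u) v) =
        insert u (Finset.univ.filter (fun v => 0 < ζ v)) := by
      ext v
      simp only [mem_filter, mem_univ, true_and, mem_insert, happ2]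
      by_cases hv : v = u
      · subst hv; rw [if_pos rfl]; constructor <;> intro <;> [exact Or.inl rfl; omega]
      · rw [if_neg hv, add_zero]
        constructor
        · exact fun h => Or.inr h
        · rintro (h | h)
          · exact absurd h hv
          · exact h
    by_cases hηu2 : 2 ≤ η u
    · -- remove an arc entering u from B2
      left
      have hpos1 : ∀ v, 0 ≤ (η - chi u) v := by
        intro v
        rw [happ1]
        have := hηpos v
        by_cases hv : v = u
        · rw [if_pos hv]
          rcases hv with rfl
          omega
        · rw [if_neg hv]; omega
      have e1 : gFun A w (η - chi u) = gFun A w η := by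
        refine gFun_congr hpos1 hηpos ?_
        ext v
        simp only [mem_filter, mem_univ, true_and, happ1]
        by_cases hv : v = u
        · subst hv; rw [if_pos rfl]; constructor <;> intro <;> omega
        · rw [if_neg hv, sub_zero]
      have hu2' : u ∉ rootSet B2 := by rw [hR2]; exact huT
      rw [mem_rootSet] at hu2'
      push_neg at hu2'
      obtain ⟨a, haB2, ha2⟩ := hu2'
      have hroots : rootSet (B2.erase a) = insert u (rootSet B2) := by
        rw [rootSet_erase hB2.2.1 haB2, ha2]
      have e2 : gFun A w (ζ + chi u) ≤ gFun A w ζ := by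
        rw [hg2]
        have hbr : IsBranching A (B2.erase a) := isBranching_subset hB2 (erase_subset a B2)
        have hroots' : rootSet (B2.erase a) =
            Finset.univ.filter (fun v => 0 < (ζ + chi u) v) := by
          rw [hroots, hR2, hsupp2]
        refine le_trans (gFun_le hpos2 hbr hroots') ?_
        exact WithTop.coe_le_coe.2
          (sum_le_sum_of_subset_of_nonneg (erase_subset _ _) (fun x _ _ => hw x))
      rw [e1]
      exact add_le_add (le_refl _) e2
    · -- η u = 1 : the exchange case
      have hηu1' : η u = 1 := by omega
      have hu1' : u ∈ rootSet B1 := by rw [hR1]; exact huS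
      have hu2' : u ∉ rootSet B2 := by rw [hR2]; exact huT
      have hpos1 : ∀ v, 0 ≤ (η - chi u) v := by
        intro v
        rw [happ1]
        have := hηpos v
        by_cases hv : v = u
        · rw [if_pos hv]
          rcases hv with rfl
          omega
        · rw [if_neg hv]; omega
      have hsupp1 : Finset.univ.filter (fun v => 0 < (η - chi u) v) =
          (Finset.univ.filter (fun v => 0 < η v)).erase u := by
        ext v
        simp only [mem_filter, mem_univ, true_and, mem_erase, happ1]
        by_cases hv : v = u
        · subst hv; rw [if_pos rfl]
          constructor
          · intro h; omega
          · rintro ⟨h, -⟩; exact absurd rfl h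
        · rw [if_neg hv, sub_zero]
          exact ⟨fun h => ⟨hv, h⟩, fun h => h.2⟩
      rcases exchange hw hB1 hB2 hu1' hu2' with
        ⟨C1, C2, hC1, hC2, hrC1, hrC2, hwsum⟩ |
        ⟨v0, hv0T, hv0S, C1, C2, hC1, hC2, hrC1, hrC2, hwsum⟩
      · left
        have hle1 : gFun A w (η - chi u) ≤ ((∑ a ∈ C1, w a : ℤ) : WithTop ℤ) := by
          refine gFun_le hpos1 hC1 ?_
          rw [hrC1, hR1, hsupp1]
        have hle2 : gFun A w (ζ + chi u) ≤ ((∑ a ∈ C2, w a : ℤ) : WithTop ℤ) := by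
          refine gFun_le hpos2 hC2 ?_
          rw [hrC2, hR2, hsupp2]
        rw [hg1, hg2]
        calc gFun A w (η - chi u) + gFun A w (ζ + chi u)
            ≤ ((∑ a ∈ C1, w a : ℤ) : WithTop ℤ) + ((∑ a ∈ C2, w a : ℤ) : WithTop ℤ) :=
              add_le_add hle1 hle2
          _ = ((∑ a ∈ C1, w a + ∑ a ∈ C2, w a : ℤ) : WithTop ℤ) := by
              rw [WithTop.coe_add]
          _ ≤ ((∑ a ∈ B1, w a + ∑ a ∈ B2, w a : ℤ) : WithTop ℤ) :=
              WithTop.coe_le_coe.2 hwsum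
          _ = _ := by rw [WithTop.coe_add]
      · -- second disjunct
        rw [hR2] at hv0T
        rw [hR1] at hv0S
        have hv0T' : 0 < ζ v0 := (mem_filter.1 hv0T).2
        have hv0S' : η v0 = 0 := by
          have : ¬ 0 < η v0 := fun h => hv0S (mem_filter.2 ⟨mem_univ _, h⟩)
          have := hηpos v0
          omega
        have hv0u : v0 ≠ u := by
          intro h
          rw [h] at hv0S'
          omega
        right
        refine ⟨v0, by omega, ?_⟩
        have happ3 : ∀ v, (η - chi u + chi v0) v =
            η v - (if v = u then 1 else 0) + (if v = v0 then 1 else 0) := fun v => rfl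
        have happ4 : ∀ v, (ζ + chi u - chi v0) v =
            ζ v + (if v = u then 1 else 0) - (if v = v0 then 1 else 0) := fun v => rfl
        have hpos3 : ∀ v, 0 ≤ (η - chi u + chi v0) v := by
          intro v
          rw [happ3]
          have := hηpos v
          by_cases hv : v = u
          · rw [if_pos hv]
            rcases hv with rfl
            omega
          · rw [if_neg hv]
            by_cases hv0 : v = v0 <;> [rw [if_pos hv0]; rw [if_neg hv0]] <;> omega
        have hpos4 : ∀ v, 0 ≤ (ζ + chi u - chi v0) v := by
          intro v
          rw [happ4]
          have := hζpos v
          by_cases hv0 : v = v0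
          · rw [if_pos hv0]
            rcases hv0 with rfl
            rw [if_neg hv0u]
            omega
          · rw [if_neg hv0]
            by_cases hv : v = u <;> [rw [if_pos hv]; rw [if_neg hv]] <;> omega
        have hsupp3 : Finset.univ.filter (fun v => 0 < (η - chi u + chi v0) v) =
            insert v0 ((Finset.univ.filter (fun v => 0 < η v)).erase u) := by
          ext v
          simp only [mem_filter, mem_univ, true_and, mem_insert, mem_erase, happ3]
          by_cases hv0 : v = v0
          · subst hv0
            rw [if_pos rfl, if_neg hv0u]
            constructor
            · intro _; exact Or.inl rfl
            · intro _; omega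
          · rw [if_neg hv0]
            by_cases hv : v = u
            · subst hv
              rw [if_pos rfl]
              constructor
              · intro h; omega
              · rintro (h | ⟨h, -⟩)
                · exact absurd h hv0
                · exact absurd rfl h
            · rw [if_neg hv, sub_zero, add_zero]
              constructor
              · intro h; exact Or.inr ⟨hv, h⟩
              · rintro (h | ⟨-, h⟩)
                · exact absurd h hv0
                · exact h
        have hle1 : gFun A w (η - chi u + chi v0) ≤ ((∑ a ∈ C1, w a : ℤ) : WithTop ℤ) := by
          refine gFun_le hpos3 hC1 ?_
          rw [hrC1, hR1, hsupp3]
        -- raise the roots of C2 to the support of ζ + chi u - chi v0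
        have hsub : rootSet C2 ⊆
            Finset.univ.filter (fun v => 0 < (ζ + chi u - chi v0) v) := by
          rw [hrC2, hR2]
          intro x hx
          rcases mem_erase.1 hx with ⟨hxv0, hxins⟩
          simp only [mem_filter, mem_univ, true_and, happ4]
          rw [if_neg hxv0]
          rcases mem_insert.1 hxins with rfl | hxT
          · rw [if_pos rfl]; omega
          · have := (mem_filter.1 hxT).2
            by_cases hxu : x = u <;> [rw [if_pos hxu]; rw [if_neg hxu]] <;> omega
        obtain ⟨C2', hC2'sub, hC2', hrC2'⟩ := raise_roots hC2 hsub
        have hle2 : gFun A w (ζ + chi u - chi v0) ≤ ((∑ a ∈ C2, w a : ℤ) : WithTop ℤ) := by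
          refine le_trans (gFun_le hpos4 hC2' hrC2') ?_
          exact WithTop.coe_le_coe.2
            (sum_le_sum_of_subset_of_nonneg hC2'sub (fun x _ _ => hw x))
        rw [hg1, hg2]
        calc gFun A w (η - chi u + chi v0) + gFun A w (ζ + chi u - chi v0)
            ≤ ((∑ a ∈ C1, w a : ℤ) : WithTop ℤ) + ((∑ a ∈ C2, w a : ℤ) : WithTop ℤ) :=
              add_le_add hle1 hle2
          _ = ((∑ a ∈ C1, w a + ∑ a ∈ C2, w a : ℤ) : WithTop ℤ) := by
              rw [WithTop.coe_add]
          _ ≤ ((∑ a ∈ B1, w a + ∑ a ∈ B2, w a : ℤ) : WithTop ℤ) :=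
              WithTop.coe_le_coe.2 hwsum
          _ = _ := by rw [WithTop.coe_add]
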